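/- Delzell's polynomial D(x₁,x₂,x₃,x₄) = x₁⁴x₂²x₄² + x₂⁴x₃²x₄² + x₁²x₃⁴x₄² − 3x₁²x₂²x₃²x₄² + x₃⁸ is nonnegative on ℝ⁴. -/
import Mathlib

theorem delzell_nonneg (x₁ x₂ x₃ x₄ : ℝ) :
    0 ≤ x₁^4*x₂^2*x₄^2 + x₂^4*x₃^2*x₄^2 + x₁^2*x₃^4*x₄^2 - 3*x₁^2*x₂^2*x₃^2*x₄^2 + x₃^8 := by
  rcases le_or_gt 0 (x₁*x₂) with h | h
  · nlinarith [sq_nonneg (x₁^2*x₂*x₄ - x₁*x₃^2*x₄), sq_nonneg (x₂^2*x₃*x₄ - x₁*x₂*x₃*x₄),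
      sq_nonneg (x₁*x₃*x₄ - x₂*x₃*x₄), sq_nonneg (x₃^4),
      mul_nonneg h (sq_nonneg (x₁*x₃*x₄ - x₂*x₃*x₄))]
  · nlinarith [sq_nonneg (x₁^2*x₂*x₄ + x₁*x₃^2*x₄), sq_nonneg (x₂^2*x₃*x₄ + x₁*x₂*x₃*x₄),
      mul_nonneg (neg_nonneg.2 h.le) (sq_nonneg (x₁*x₃*x₄ + x₂*x₃*x₄)), sq_nonneg (x₃^4)]
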